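/- arXiv:1601.03906 — 7 statements merged into one kernel-verified Lean document; each statement's English description precedes it below -/
import Mathlib

section
/- If f: [0,1] → ℝ is convex, then for every m ≥ 1 its Bernstein approximation B_m(f, t) = Σ_{k=0}^m f(k/m) b_{k,m}(t) is convex on [0,1]. -/
/-- Bernstein basis polynomial `b_{k,m}(x) = C(m,k) x^k (1-x)^{m-k}`. -/
noncomputable def bern (m k : ℕ) (x : ℝ) : ℝ := (m.choose k : ℝ) * x ^ k * (1 - x) ^ (m - k)

/-- The `m`-th Bernstein approximation of `f`. -/
noncomputable def bernApprox (f : ℝ → ℝ) (m : ℕ) (t : ℝ) : ℝ :=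
  ∑ k ∈ Finset.range (m + 1), f ((k : ℝ) / (m : ℝ)) * bern m k t

open Polynomial Finset

lemma deriv_sum_bern (n : ℕ) (a : ℕ → ℝ) :
    Polynomial.derivative (∑ k ∈ Finset.range (n + 2),
        Polynomial.C (a k) * bernsteinPolynomial ℝ (n + 1) k)
      = ((n + 1 : ℕ) : ℝ[X]) *
          ∑ k ∈ Finset.range (n + 1),
            Polynomial.C (a (k + 1) - a k) * bernsteinPolynomial ℝ n k := by
  have shift : ∑ k ∈ Finset.range (n + 1),
        Polynomial.C (a (k + 1)) * bernsteinPolynomial ℝ n (k + 1)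
      = ∑ k ∈ Finset.range (n + 1), Polynomial.C (a k) * bernsteinPolynomial ℝ n k
        - Polynomial.C (a 0) * bernsteinPolynomial ℝ n 0 := by
    have h0 : ∑ k ∈ Finset.range (n + 2), Polynomial.C (a k) * bernsteinPolynomial ℝ n k
        = (∑ k ∈ Finset.range (n + 1),
            Polynomial.C (a (k + 1)) * bernsteinPolynomial ℝ n (k + 1))
          + Polynomial.C (a 0) * bernsteinPolynomial ℝ n 0 := Finset.sum_range_succ' _ _
    have h1 : ∑ k ∈ Finset.range (n + 2), Polynomial.C (a k) * bernsteinPolynomial ℝ n k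
        = ∑ k ∈ Finset.range (n + 1), Polynomial.C (a k) * bernsteinPolynomial ℝ n k := by
      rw [Finset.sum_range_succ, bernsteinPolynomial.eq_zero_of_lt ℝ (Nat.lt_succ_self n),
        mul_zero, add_zero]
    linear_combination h1 - h0
  have e : ∀ (b : ℕ → ℝ) (g : ℕ → ℝ[X]), ∑ x ∈ Finset.range (n + 1),
        Polynomial.C (b x) * (((n : ℝ[X]) + 1) * g x)
      = ((n : ℝ[X]) + 1) * ∑ x ∈ Finset.range (n + 1), Polynomial.C (b x) * g x := by
    intro b g
    rw [Finset.mul_sum]; exact Finset.sum_congr rfl fun k _ => by ring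
  rw [Finset.sum_range_succ']
  rw [map_add, map_sum]
  simp only [Polynomial.derivative_C_mul, bernsteinPolynomial.derivative_succ,
    bernsteinPolynomial.derivative_zero, Nat.add_sub_cancel]
  simp only [mul_sub, Finset.sum_sub_distrib, Polynomial.C_sub, sub_mul, Finset.mul_sum]
  push_cast
  rw [e, e, ← Finset.mul_sum, ← Finset.mul_sum, shift]
  ring

lemma bern_poly_eval_nonneg (n k : ℕ) {x : ℝ} (hx : x ∈ Set.Icc (0:ℝ) 1) :
    0 ≤ (bernsteinPolynomial ℝ n k).eval x := by
  obtain ⟨h0, h1⟩ := hx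
  simp only [bernsteinPolynomial, Polynomial.eval_mul, Polynomial.eval_pow,
    Polynomial.eval_natCast, Polynomial.eval_X, Polynomial.eval_sub, Polynomial.eval_one]
  have : (0:ℝ) ≤ 1 - x := by linarith
  positivity

lemma second_diff_nonneg (f : ℝ → ℝ) (hf : ConvexOn ℝ (Set.Icc (0:ℝ) 1) f)
    (m k : ℕ) (h : k + 2 ≤ m) :
    0 ≤ f (((k + 2 : ℕ) : ℝ) / (m : ℝ)) - 2 * f (((k + 1 : ℕ) : ℝ) / (m : ℝ))
        + f ((k : ℝ) / (m : ℝ)) := by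
  have hm0 : (0:ℝ) < m := by
    have : 0 < m := by omega
    exact_mod_cast this
  have hx : (k : ℝ) / m ∈ Set.Icc (0:ℝ) 1 := by
    constructor
    · positivity
    · rw [div_le_one hm0]
      exact_mod_cast (by omega : k ≤ m)
  have hy : ((k + 2 : ℕ) : ℝ) / m ∈ Set.Icc (0:ℝ) 1 := by
    constructor
    · positivity
    · rw [div_le_one hm0]
      exact_mod_cast h
  have hmid := hf.2 hx hy (by norm_num : (0:ℝ) ≤ 1/2) (by norm_num : (0:ℝ) ≤ 1/2)
    (by norm_num)
  have heq : (1/2 : ℝ) • ((k : ℝ) / m) + (1/2 : ℝ) • (((k + 2 : ℕ) : ℝ) / m)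
      = ((k + 1 : ℕ) : ℝ) / m := by
    push_cast
    simp only [smul_eq_mul]
    field_simp [hm0.ne']
    ring
  rw [heq] at hmid
  simp only [smul_eq_mul] at hmid
  linarith

theorem bernstein_approx_convex (f : ℝ → ℝ) (hf : ConvexOn ℝ (Set.Icc (0:ℝ) 1) f)
    (m : ℕ) (hm : 1 ≤ m) :
    ConvexOn ℝ (Set.Icc (0:ℝ) 1) (bernApprox f m) := by
  set a : ℕ → ℝ := fun k => f ((k : ℝ) / (m : ℝ)) with ha
  set P : ℝ[X] := ∑ k ∈ Finset.range (m + 1),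
      Polynomial.C (a k) * bernsteinPolynomial ℝ m k with hP
  have hEq : bernApprox f m = fun t => P.eval t := by
    funext t
    simp only [bernApprox, hP, Polynomial.eval_finset_sum, Polynomial.eval_mul,
      Polynomial.eval_C, ha]
    refine Finset.sum_congr rfl fun k _ => ?_
    simp [bernsteinPolynomial, bern]
  have hd2 : ∀ x ∈ Set.Icc (0:ℝ) 1, 0 ≤ (derivative (derivative P)).eval x := by
    intro x hx
    match m, hm with
    | 1, _ =>
      have : derivative (derivative P) = 0 := by
        simp only [hP]
        rw [show (1:ℕ) + 1 = 2 from rfl]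
        rw [Finset.sum_range_succ, Finset.sum_range_succ, Finset.sum_range_zero, zero_add]
        simp [bernsteinPolynomial]
      rw [this]
      simp
    | (n + 2), _ =>
      have h1 : derivative P = ((n + 2 : ℕ) : ℝ[X]) *
          ∑ k ∈ Finset.range (n + 2),
            Polynomial.C (a (k + 1) - a k) * bernsteinPolynomial ℝ (n + 1) k := by
        rw [hP]
        exact deriv_sum_bern (n + 1) a
      have h2 : derivative (derivative P) = ((n + 2 : ℕ) : ℝ[X]) * (((n + 1 : ℕ) : ℝ[X]) *
          ∑ k ∈ Finset.range (n + 1),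
            Polynomial.C ((a (k + 2) - a (k + 1)) - (a (k + 1) - a k))
              * bernsteinPolynomial ℝ n k) := by
        rw [h1, Polynomial.derivative_natCast_mul,
          deriv_sum_bern n (fun k => a (k + 1) - a k)]
      rw [h2]
      simp only [Polynomial.eval_mul, Polynomial.eval_natCast, Polynomial.eval_finset_sum,
        Polynomial.eval_C]
      have hsum : 0 ≤ ∑ k ∈ Finset.range (n + 1),
          ((a (k + 2) - a (k + 1)) - (a (k + 1) - a k)) * (bernsteinPolynomial ℝ n k).eval x := by
        refine Finset.sum_nonneg fun k hk => mul_nonneg ?_ (bern_poly_eval_nonneg n k hx)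
        have hk' : k + 2 ≤ n + 2 := by
          have := Finset.mem_range.mp hk; omega
        have := second_diff_nonneg f hf (n + 2) k hk'
        simp only [ha]
        linarith
      positivity
  refine convexOn_of_deriv2_nonneg (convex_Icc 0 1) ?_ ?_ ?_ ?_
  · rw [hEq]; exact (Polynomial.continuous P).continuousOn
  · rw [hEq]; exact (Polynomial.differentiable P).differentiableOn
  · rw [hEq]
    have : deriv (fun t => P.eval t) = fun t => (derivative P).eval t :=
      funext fun t => Polynomial.deriv P
    rw [this]
    exact (Polynomial.differentiable _).differentiableOn
  · intro x hx
    rw [hEq]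
    have hx' : x ∈ Set.Icc (0:ℝ) 1 := by
      rw [interior_Icc] at hx
      exact Set.mem_Icc_of_Ioo hx
    have hfe : deriv (fun t => P.eval t) = fun t => (derivative P).eval t :=
      funext fun t => Polynomial.deriv P
    have : deriv^[2] (fun t => P.eval t) x = (derivative (derivative P)).eval x := by
      simp only [Function.iterate_succ, Function.iterate_zero, Function.comp_apply, id_eq]
      rw [hfe, Polynomial.deriv]
    rw [this]
    exact hd2 x hx'
end

section
/- Let h: (0,1) → ℝ be a nonnegative continuous integrable function satisfying ∫_0^1 (1-w) h(w) dw ≤ 1 and ∫_0^1 w h(w) dw ≤ 1. Define A(t) = 1 - ∫_0^1 min((1-t)w, t(1-w)) h(w) dw for t ∈ [0,1]. Then A is a Pickands dependence function: A is convex, A(0) = A(1) = 1, and max(t, 1-t) ≤ A(t) ≤ 1 for all t ∈ [0,1]. -/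
open MeasureTheory Set

/-- `A` is a Pickands dependence function. -/
def IsPickands (A : ℝ → ℝ) : Prop :=
  ConvexOn ℝ (Set.Icc (0:ℝ) 1) A ∧
    ∀ t ∈ Set.Icc (0:ℝ) 1, max t (1 - t) ≤ A t ∧ A t ≤ 1

theorem pickands_from_density (h : ℝ → ℝ)
    (hpos : ∀ w ∈ Set.Ioo (0:ℝ) 1, 0 ≤ h w)
    (hcont : ContinuousOn h (Set.Ioo (0:ℝ) 1))
    (hint : MeasureTheory.IntegrableOn h (Set.Ioo (0:ℝ) 1))
    (hb0 : (∫ w in (0:ℝ)..1, (1 - w) * h w) ≤ 1)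
    (hb1 : (∫ w in (0:ℝ)..1, w * h w) ≤ 1)
    (A : ℝ → ℝ)
    (hA : ∀ t, A t = 1 - ∫ w in (0:ℝ)..1, min ((1 - t) * w) (t * (1 - w)) * h w) :
    IsPickands A ∧ A 0 = 1 ∧ A 1 = 1 := by
  have hIoo : ∀ (f : ℝ → ℝ), (∫ w in (0:ℝ)..1, f w) = ∫ w in Set.Ioo (0:ℝ) 1, f w := by
    intro f
    rw [intervalIntegral.integral_of_le zero_le_one,
      setIntegral_congr_set Ioo_ae_eq_Ioc.symm]
  have hmeas : AEStronglyMeasurable h (volume.restrict (Set.Ioo (0:ℝ) 1)) :=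
    hint.aestronglyMeasurable
  -- generic integrability lemma
  have hInt : ∀ (φ : ℝ → ℝ) (C : ℝ), Continuous φ → (∀ w ∈ Set.Ioo (0:ℝ) 1, |φ w| ≤ C) →
      MeasureTheory.IntegrableOn (fun w => ((φ w) * h w : ℝ)) (Set.Ioo 0 1) := by
    intro φ C hφ hC
    refine (hint.norm.const_mul C).mono' (hφ.aestronglyMeasurable.mul hmeas) ?_
    filter_upwards [ae_restrict_mem measurableSet_Ioo] with w hw
    have h1 := hC w hw
    simp only [norm_mul, Real.norm_eq_abs]
    exact mul_le_mul_of_nonneg_right h1 (abs_nonneg _)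
  have hcontmin : ∀ t : ℝ, Continuous (fun w : ℝ => min ((1 - t) * w) (t * (1 - w))) := by
    intro t
    exact (continuous_const.mul continuous_id).min
      (continuous_const.mul (continuous_const.sub continuous_id))
  have hIntMin : ∀ t : ℝ,
      MeasureTheory.IntegrableOn
        (fun w => min ((1 - t) * w) (t * (1 - w)) * h w) (Set.Ioo 0 1) := by
    intro t
    refine hInt _ (|1 - t| + |t|) (hcontmin t) ?_
    intro w hw
    have hw0 : (0:ℝ) < w := hw.1
    have hw1 : w < 1 := hw.2
    rcases min_choice ((1 - t) * w) (t * (1 - w)) with hm | hm <;> rw [hm, abs_mul]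
    · have : |w| ≤ 1 := by rw [abs_of_pos hw0]; linarith
      nlinarith [abs_nonneg (1 - t), abs_nonneg t, abs_nonneg w]
    · have : |1 - w| ≤ 1 := by rw [abs_of_pos (by linarith)]; linarith
      nlinarith [abs_nonneg (1 - t), abs_nonneg t, abs_nonneg (1 - w)]
  have hIntW : MeasureTheory.IntegrableOn (fun w => (w * h w : ℝ)) (Set.Ioo 0 1) := by
    refine hInt _ 1 continuous_id ?_
    intro w hw; rw [abs_of_pos hw.1]; linarith [hw.2]
  have hIntW' : MeasureTheory.IntegrableOn (fun w => ((1 - w) * h w : ℝ)) (Set.Ioo 0 1) := by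
    refine hInt _ 1 (continuous_const.sub continuous_id) ?_
    intro w hw; rw [abs_of_pos (by linarith [hw.2])]; linarith [hw.1]
  -- rewrite A via set integrals
  have hA' : ∀ t, A t = 1 - ∫ w in Set.Ioo (0:ℝ) 1, min ((1 - t) * w) (t * (1 - w)) * h w := by
    intro t; rw [hA t, hIoo]
  have hb1' : (∫ w in Set.Ioo (0:ℝ) 1, w * h w) ≤ 1 := by rw [← hIoo]; exact hb1
  have hb0' : (∫ w in Set.Ioo (0:ℝ) 1, (1 - w) * h w) ≤ 1 := by rw [← hIoo]; exact hb0
  -- bounds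
  have hbounds : ∀ t ∈ Set.Icc (0:ℝ) 1, max t (1 - t) ≤ A t ∧ A t ≤ 1 := by
    intro t ht
    obtain ⟨ht0, ht1⟩ := ht
    constructor
    · rw [max_le_iff, hA']
      constructor
      · -- A t ≥ t : integral ≤ (1-t) * ∫ w h ≤ 1 - t
        have h1 : (∫ w in Set.Ioo (0:ℝ) 1, min ((1 - t) * w) (t * (1 - w)) * h w)
            ≤ ∫ w in Set.Ioo (0:ℝ) 1, (1 - t) * (w * h w) := by
          refine setIntegral_mono_on (hIntMin t) ?_ measurableSet_Ioo ?_
          · exact hIntW.const_mul (1 - t)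
          · intro w hw
            rw [← mul_assoc]
            exact mul_le_mul_of_nonneg_right (min_le_left _ _) (hpos w hw)
        rw [integral_const_mul] at h1
        nlinarith
      · have h1 : (∫ w in Set.Ioo (0:ℝ) 1, min ((1 - t) * w) (t * (1 - w)) * h w)
            ≤ ∫ w in Set.Ioo (0:ℝ) 1, t * ((1 - w) * h w) := by
          refine setIntegral_mono_on (hIntMin t) ?_ measurableSet_Ioo ?_
          · exact hIntW'.const_mul t
          · intro w hw
            rw [← mul_assoc]
            exact mul_le_mul_of_nonneg_right (min_le_right _ _) (hpos w hw)
        rw [integral_const_mul] at h1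
        nlinarith
    · rw [hA']
      have h1 : (0:ℝ) ≤ ∫ w in Set.Ioo (0:ℝ) 1, min ((1 - t) * w) (t * (1 - w)) * h w := by
        refine setIntegral_nonneg measurableSet_Ioo ?_
        intro w hw
        have := hpos w hw
        have hmin : 0 ≤ min ((1 - t) * w) (t * (1 - w)) :=
          le_min (by nlinarith [hw.1, hw.2]) (by nlinarith [hw.1, hw.2])
        positivity
      linarith
  -- convexity
  have hconv : ConvexOn ℝ (Set.Icc (0:ℝ) 1) A := by
    refine ⟨convex_Icc 0 1, ?_⟩
    intro x hx y hy a b ha hb hab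
    simp only [smul_eq_mul]
    rw [hA', hA', hA']
    have key : a * (∫ w in Set.Ioo (0:ℝ) 1, min ((1 - x) * w) (x * (1 - w)) * h w)
        + b * (∫ w in Set.Ioo (0:ℝ) 1, min ((1 - y) * w) (y * (1 - w)) * h w)
        ≤ ∫ w in Set.Ioo (0:ℝ) 1,
            min ((1 - (a * x + b * y)) * w) ((a * x + b * y) * (1 - w)) * h w := by
      rw [← integral_const_mul, ← integral_const_mul,
        ← integral_add ((hIntMin x).const_mul a) ((hIntMin y).const_mul b)]
      refine setIntegral_mono_on (((hIntMin x).const_mul a).add ((hIntMin y).const_mul b))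
        (hIntMin _) measurableSet_Ioo ?_
      intro w hw
      have hhw := hpos w hw
      have hmx1 := min_le_left ((1 - x) * w) (x * (1 - w))
      have hmx2 := min_le_right ((1 - x) * w) (x * (1 - w))
      have hmy1 := min_le_left ((1 - y) * w) (y * (1 - w))
      have hmy2 := min_le_right ((1 - y) * w) (y * (1 - w))
      have hcomb : a * min ((1 - x) * w) (x * (1 - w)) + b * min ((1 - y) * w) (y * (1 - w))
          ≤ min ((1 - (a * x + b * y)) * w) ((a * x + b * y) * (1 - w)) := by
        have habw : a * w + b * w = w := by rw [← add_mul, hab, one_mul]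
        have habw' : a * (1 - w) + b * (1 - w) = 1 - w := by rw [← add_mul, hab, one_mul]
        refine le_min ?_ ?_
        · nlinarith [mul_le_mul_of_nonneg_left hmx1 ha, mul_le_mul_of_nonneg_left hmy1 hb]
        · nlinarith [mul_le_mul_of_nonneg_left hmx2 ha, mul_le_mul_of_nonneg_left hmy2 hb]
      nlinarith
    linarith
  refine ⟨⟨hconv, hbounds⟩, ?_, ?_⟩
  · rw [hA']
    have hz : (∫ w in Set.Ioo (0:ℝ) 1, min ((1 - (0:ℝ)) * w) ((0:ℝ) * (1 - w)) * h w)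
        = ∫ _ in Set.Ioo (0:ℝ) 1, (0:ℝ) := by
      refine setIntegral_congr_fun measurableSet_Ioo ?_
      intro w hw
      have hm : min ((1 - (0:ℝ)) * w) ((0:ℝ) * (1 - w)) = 0 := by
        rw [min_eq_right]; · ring
        · nlinarith [hw.1]
      show ((1 - (0:ℝ)) * w ⊓ (0:ℝ) * (1 - w)) * h w = 0
      rw [hm, zero_mul]
    rw [hz, integral_zero]; ring
  · rw [hA']
    have hz : (∫ w in Set.Ioo (0:ℝ) 1, min ((1 - (1:ℝ)) * w) ((1:ℝ) * (1 - w)) * h w)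
        = ∫ _ in Set.Ioo (0:ℝ) 1, (0:ℝ) := by
      refine setIntegral_congr_fun measurableSet_Ioo ?_
      intro w hw
      have hm : min ((1 - (1:ℝ)) * w) ((1:ℝ) * (1 - w)) = 0 := by
        rw [min_eq_left]; · ring
        · nlinarith [hw.2]
      show ((1 - (1:ℝ)) * w ⊓ (1:ℝ) * (1 - w)) * h w = 0
      rw [hm, zero_mul]
    rw [hz, integral_zero]; ring
end

section
/- Let A be a polynomial of degree at most m+2 (m ≥ 0). Then A is a Pickands dependence function if and only if: (1) c(0) = c(m+2) = 1, (2) min(c(1), c(m+1)) ≥ (m+1)/(m+2), and (3) A''(t) ≥ 0 for all t ∈ [0,1], where c(k) denote the coefficients of A in the Bernstein basis of degree m+2, i.e., A(t) = Σ_{k=0}^{m+2} c(k) b_{k,m+2}(t). -/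
open Set Filter Polynomial

lemma bern_hasDerivAt (n k : ℕ) (x : ℝ) :
    HasDerivAt (bern n k)
      ((n.choose k : ℝ) * ((k * x^(k-1)) * (1-x)^(n-k) - x^k * (((n-k : ℕ) : ℝ) * (1-x)^(n-k-1)))) x := by
  have h1 : HasDerivAt (fun y:ℝ => y ^ k) ((k:ℝ) * x^(k-1)) x := hasDerivAt_pow k x
  have hid : HasDerivAt (fun y:ℝ => 1 - y) (-1) x := (hasDerivAt_id x).const_sub 1
  have h2 : HasDerivAt (fun y:ℝ => (1 - y) ^ (n-k)) (((n-k : ℕ) : ℝ) * (1-x)^(n-k-1) * -1) x := hid.pow (n-k)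
  have H : HasDerivAt (fun y:ℝ => (n.choose k:ℝ) * (y^k * (1-y)^(n-k))) ((n.choose k:ℝ) * (((k:ℝ) * x^(k-1)) * (1-x)^(n-k) + x^k * (((n-k:ℕ):ℝ) * (1-x)^(n-k-1) * -1))) x := (h1.mul h2).const_mul ((n.choose k : ℝ))
  have hb : bern n k = fun y => (n.choose k:ℝ) * (y^k * (1-y)^(n-k)) := by
    funext y; simp [bern, mul_assoc]
  rw [hb]
  convert H using 1
  generalize ((n - k : ℕ) : ℝ) = a
  ring

lemma le_deriv_of_slope_right {f : ℝ → ℝ} {x d C : ℝ} (hf : HasDerivAt f d x)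
    (h : ∀ᶠ t in nhdsWithin x (Ioi x), C ≤ slope f x t) : C ≤ d :=
  ge_of_tendsto ((hasDerivWithinAt_iff_tendsto_slope' notMem_Ioi_self).mp
    (hf.hasDerivWithinAt (s := Ioi x))) h

lemma le_deriv_of_slope_left {f : ℝ → ℝ} {x d C : ℝ} (hf : HasDerivAt f d x)
    (h : ∀ᶠ t in nhdsWithin x (Iio x), C ≤ slope f x t) : C ≤ d :=
  ge_of_tendsto ((hasDerivWithinAt_iff_tendsto_slope' notMem_Iio_self).mp
    (hf.hasDerivWithinAt (s := Iio x))) h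

lemma deriv_le_of_slope_left {f : ℝ → ℝ} {x d C : ℝ} (hf : HasDerivAt f d x)
    (h : ∀ᶠ t in nhdsWithin x (Iio x), slope f x t ≤ C) : d ≤ C :=
  le_of_tendsto ((hasDerivWithinAt_iff_tendsto_slope' notMem_Iio_self).mp
    (hf.hasDerivWithinAt (s := Iio x))) h

theorem pickands_polynomial_characterization (m : ℕ) (c : ℕ → ℝ) (A : ℝ → ℝ)
    (hA : ∀ t, A t = ∑ k ∈ Finset.range (m + 3), c k * bern (m + 2) k t) :
    IsPickands A ↔
      (c 0 = 1 ∧ c (m + 2) = 1 ∧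
        ((m : ℝ) + 1) / ((m : ℝ) + 2) ≤ min (c 1) (c (m + 1)) ∧
        ∀ t ∈ Set.Icc (0:ℝ) 1, 0 ≤ deriv (deriv A) t) := by
  have hAfun : A = fun t => ∑ k ∈ Finset.range (m + 3), c k * bern (m + 2) k t := funext hA
  set P : Polynomial ℝ := ∑ k ∈ Finset.range (m+3), Polynomial.C (c k) * bernsteinPolynomial ℝ (m+2) k with hP
  have hAP : A = fun t => P.eval t := by
    funext t
    rw [hA, hP, Polynomial.eval_finset_sum]
    refine Finset.sum_congr rfl fun k hk => ?_
    simp [bernsteinPolynomial, bern, mul_assoc]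
  have hdiff : Differentiable ℝ A := by rw [hAP]; exact P.differentiable
  have hcont : Continuous A := hdiff.continuous
  have hd1eq : deriv A = fun t => (Polynomial.derivative P).eval t := by
    funext t; rw [hAP]; exact P.deriv
  have hdiff' : Differentiable ℝ (deriv A) := by
    rw [hd1eq]; exact (Polynomial.derivative P).differentiable
  have hm2 : (0:ℝ) < (m:ℝ) + 2 := by positivity
  have hA0 : A 0 = c 0 := by
    rw [hA, Finset.sum_eq_single_of_mem 0 (by simp)]
    · simp [bern]
    · intro k _ hk; simp [bern, zero_pow hk]
  have hA1 : A 1 = c (m + 2) := by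
    rw [hA, Finset.sum_eq_single_of_mem (m+2) (by simp)]
    · simp [bern]
    · intro k hk hk2
      have : m + 2 - k ≠ 0 := by simp at hk; omega
      simp [bern, zero_pow this]
  have hDer : ∀ x, HasDerivAt A (∑ k ∈ Finset.range (m+3), c k *
      ((((m+2).choose k : ℝ)) * ((k * x^(k-1)) * (1-x)^(m+2-k)
        - x^k * (((m+2-k : ℕ) : ℝ) * (1-x)^(m+2-k-1))))) x := by
    intro x
    rw [hAfun]
    exact HasDerivAt.fun_sum (fun k _ => (bern_hasDerivAt (m+2) k x).const_mul (c k))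
  have hd0 : deriv A 0 = ((m:ℝ)+2) * (c 1 - c 0) := by
    rw [(hDer 0).deriv, Finset.sum_range_succ', Finset.sum_range_succ']
    rw [Finset.sum_eq_zero (fun i _ => by simp [zero_pow])]
    simp [Nat.choose_one_right]
    ring
  have hd1 : deriv A 1 = ((m:ℝ)+2) * (c (m+2) - c (m+1)) := by
    rw [(hDer 1).deriv, Finset.sum_range_succ, Finset.sum_range_succ]
    rw [Finset.sum_eq_zero (fun k hk => by
      have h1 : m + 2 - k ≠ 0 := by simp at hk; omega
      have h2 : m + 2 - k - 1 ≠ 0 := by simp at hk; omega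
      simp [zero_pow h1, zero_pow h2])]
    simp [Nat.choose_succ_self_right]
    ring
  constructor
  · rintro ⟨hconv, hbound⟩
    have hb0 := hbound 0 (by norm_num)
    have hb1 := hbound 1 (by norm_num)
    have hc0 : c 0 = 1 := by
      rw [← hA0]
      have h1 : (1:ℝ) ≤ A 0 := by
        have := hb0.1; simpa using this
      linarith [hb0.2]
    have hcn : c (m+2) = 1 := by
      rw [← hA1]
      have h1 : (1:ℝ) ≤ A 1 := by
        have := hb1.1; simpa using this
      linarith [hb1.2]
    have hAlow : ∀ t ∈ Icc (0:ℝ) 1, 1 - t ≤ A t :=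
      fun t ht => le_trans (le_max_right _ _) (hbound t ht).1
    have hAlow2 : ∀ t ∈ Icc (0:ℝ) 1, t ≤ A t :=
      fun t ht => le_trans (le_max_left _ _) (hbound t ht).1
    have hA0' : A 0 = 1 := by rw [hA0, hc0]
    have hA1' : A 1 = 1 := by rw [hA1, hcn]
    have hd0ge : (-1:ℝ) ≤ deriv A 0 := by
      apply le_deriv_of_slope_right (hdiff 0).hasDerivAt
      filter_upwards [Ioo_mem_nhdsGT_of_mem (left_mem_Ico.mpr one_pos)] with t ht
      rw [slope_def_field, hA0', sub_zero, le_div_iff₀ ht.1]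
      have := hAlow t ⟨ht.1.le, ht.2.le⟩
      linarith
    have hd1le : deriv A 1 ≤ 1 := by
      apply deriv_le_of_slope_left (hdiff 1).hasDerivAt
      filter_upwards [Ioo_mem_nhdsLT_of_mem (right_mem_Ioc.mpr one_pos)] with t ht
      rw [slope_def_field, hA1', div_le_iff_of_neg (by linarith [ht.2] : t - 1 < 0)]
      have := hAlow2 t ⟨ht.1.le, ht.2.le⟩
      linarith
    have hc1 : ((m:ℝ)+1)/((m:ℝ)+2) ≤ c 1 := by
      rw [div_le_iff₀ hm2]
      rw [hd0, hc0] at hd0ge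
      nlinarith
    have hcm1 : ((m:ℝ)+1)/((m:ℝ)+2) ≤ c (m+1) := by
      rw [div_le_iff₀ hm2]
      rw [hd1, hcn] at hd1le
      nlinarith
    refine ⟨hc0, hcn, le_min hc1 hcm1, ?_⟩
    have hmono : MonotoneOn (deriv A) (Icc (0:ℝ) 1) :=
      hconv.monotoneOn_deriv (fun x _ => hdiff x)
    intro t ht
    rcases eq_or_lt_of_le ht.2 with h1 | h1
    · rw [h1]
      apply le_deriv_of_slope_left (hdiff' 1).hasDerivAt
      filter_upwards [Ioo_mem_nhdsLT_of_mem (right_mem_Ioc.mpr one_pos)] with s hs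
      rw [slope_def_field]
      rw [div_nonneg_iff]
      right
      constructor
      · have := hmono ⟨hs.1.le, hs.2.le⟩ (right_mem_Icc.mpr zero_le_one) hs.2.le
        linarith
      · linarith [hs.2]
    · apply le_deriv_of_slope_right (hdiff' t).hasDerivAt
      filter_upwards [Ioo_mem_nhdsGT_of_mem (left_mem_Ico.mpr h1)] with s hs
      rw [slope_def_field]
      apply div_nonneg
      · have := hmono ht ⟨le_trans ht.1 hs.1.le, hs.2.le⟩ hs.1.le
        linarith
      · linarith [hs.1]
  · rintro ⟨hc0, hcn, hmin, hd2⟩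
    have hc1 : ((m:ℝ)+1)/((m:ℝ)+2) ≤ c 1 := le_trans hmin (min_le_left _ _)
    have hcm1 : ((m:ℝ)+1)/((m:ℝ)+2) ≤ c (m+1) := le_trans hmin (min_le_right _ _)
    rw [div_le_iff₀ hm2] at hc1 hcm1
    have hconv : ConvexOn ℝ (Icc (0:ℝ) 1) A := by
      apply convexOn_of_deriv2_nonneg (convex_Icc 0 1) hcont.continuousOn
        hdiff.differentiableOn hdiff'.differentiableOn
      intro x hx
      rw [interior_Icc] at hx
      exact hd2 x ⟨hx.1.le, hx.2.le⟩
    have hmono : MonotoneOn (deriv A) (Icc (0:ℝ) 1) :=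
      hconv.monotoneOn_deriv (fun x _ => hdiff x)
    have hda0 : ∀ x ∈ Icc (0:ℝ) 1, -1 ≤ deriv A x := by
      intro x hx
      have h := hmono (left_mem_Icc.mpr zero_le_one) hx hx.1
      rw [hd0, hc0] at h
      nlinarith
    have hda1 : ∀ x ∈ Icc (0:ℝ) 1, deriv A x ≤ 1 := by
      intro x hx
      have h := hmono hx (right_mem_Icc.mpr zero_le_one) hx.2
      rw [hd1, hcn] at h
      nlinarith
    have hA0' : A 0 = 1 := by rw [hA0, hc0]
    have hA1' : A 1 = 1 := by rw [hA1, hcn]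
    have hlow1 : ∀ t ∈ Icc (0:ℝ) 1, 1 - t ≤ A t := by
      have hca : ContinuousOn (fun s : ℝ => A s + s) (Icc (0:ℝ) 1) :=
        (hcont.add continuous_id).continuousOn
      have hdaa : DifferentiableOn ℝ (fun s : ℝ => A s + s) (interior (Icc (0:ℝ) 1)) :=
        (hdiff.add differentiable_id).differentiableOn
      have hmonoh : MonotoneOn (fun s => A s + s) (Icc (0:ℝ) 1) := by
        apply monotoneOn_of_deriv_nonneg (convex_Icc 0 1) hca hdaa
        intro x hx
        rw [interior_Icc] at hx
        rw [deriv_fun_add (hdiff x) differentiableAt_fun_id]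
        simp only [deriv_id'']
        linarith [hda0 x ⟨hx.1.le, hx.2.le⟩]
      intro t ht
      have := hmonoh (left_mem_Icc.mpr zero_le_one) ht ht.1
      simp only [hA0'] at this
      linarith
    have hlow2 : ∀ t ∈ Icc (0:ℝ) 1, t ≤ A t := by
      have hca : ContinuousOn (fun s : ℝ => A s - s) (Icc (0:ℝ) 1) :=
        (hcont.sub continuous_id).continuousOn
      have hdaa : DifferentiableOn ℝ (fun s : ℝ => A s - s) (interior (Icc (0:ℝ) 1)) :=
        (hdiff.sub differentiable_id).differentiableOn
      have hmonoh : AntitoneOn (fun s => A s - s) (Icc (0:ℝ) 1) := by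
        apply antitoneOn_of_deriv_nonpos (convex_Icc 0 1) hca hdaa
        intro x hx
        rw [interior_Icc] at hx
        rw [deriv_fun_sub (hdiff x) differentiableAt_fun_id]
        simp only [deriv_id'']
        linarith [hda1 x ⟨hx.1.le, hx.2.le⟩]
      intro t ht
      have := hmonoh ht (right_mem_Icc.mpr zero_le_one) ht.2
      simp only [hA1'] at this
      linarith
    refine ⟨hconv, fun t ht => ⟨max_le (hlow2 t ht) (hlow1 t ht), ?_⟩⟩
    have := hconv.2 (left_mem_Icc.mpr zero_le_one) (right_mem_Icc.mpr zero_le_one)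
      (by linarith [ht.2] : (0:ℝ) ≤ 1 - t) ht.1 (by ring)
    simp only [smul_eq_mul, mul_zero, mul_one, zero_add, hA0', hA1'] at this
    linarith
end

section
/- A polynomial A of degree at most 2, written in the Bernstein basis as A(t) = c_0 b_{0,2}(t) + c_1 b_{1,2}(t) + c_2 b_{2,2}(t), is a Pickands dependence function if and only if c_0 = c_2 = 1 and 1/2 ≤ c_1 ≤ 1. -/
theorem pickands_degree_two (c₀ c₁ c₂ : ℝ) (A : ℝ → ℝ)
    (hA : ∀ t, A t = c₀ * bern 2 0 t + c₁ * bern 2 1 t + c₂ * bern 2 2 t) :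
    IsPickands A ↔ (c₀ = 1 ∧ c₂ = 1 ∧ 1 / 2 ≤ c₁ ∧ c₁ ≤ 1) := by
  have hval : ∀ t : ℝ, A t = c₀ * (1 - t)^2 + c₁ * (2 * t * (1 - t)) + c₂ * t^2 := by
    intro t
    rw [hA]
    simp [bern]
  constructor
  · rintro ⟨hconv, hbd⟩
    have h0 := hbd 0 (by norm_num)
    have h1 := hbd 1 (by norm_num)
    have hh := hbd (1/2) (by norm_num)
    rw [hval] at h0 h1 hh
    norm_num at h0 h1 hh
    have hc0 : c₀ = 1 := le_antisymm h0.2 h0.1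
    have hc2 : c₂ = 1 := le_antisymm h1.2 h1.1
    refine ⟨hc0, hc2, ?_, ?_⟩
    · by_contra hlt
      push_neg at hlt
      set t : ℝ := 2 / (3 - 2 * c₁) with ht
      have hd : (2:ℝ) < 3 - 2 * c₁ := by linarith
      have hd0 : (0:ℝ) < 3 - 2 * c₁ := by linarith
      have ht0 : 0 < t := by positivity
      have ht1 : t < 1 := by
        rw [ht, div_lt_one hd0]; linarith
      have h := (hbd t ⟨le_of_lt ht0, le_of_lt ht1⟩).1
      rw [hval, hc0, hc2] at h
      have h' : t ≤ 1 * (1 - t)^2 + c₁ * (2 * t * (1 - t)) + 1 * t^2 :=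
        le_trans (le_max_left _ _) h
      have htd : t * (3 - 2 * c₁) = 2 := by
        rw [ht]; field_simp
      nlinarith [mul_pos ht0 (sub_pos.2 ht1), sq_nonneg t]
    · linarith [hh.2, hc0, hc2]
  · rintro ⟨hc0, hc2, hl, hu⟩
    subst hc0 hc2
    constructor
    · refine ⟨convex_Icc 0 1, ?_⟩
      intro x hx y hy a b ha hb hab
      obtain rfl : b = 1 - a := by linarith
      simp only [smul_eq_mul, hval]
      nlinarith [mul_nonneg (mul_nonneg ha hb) (sq_nonneg (x - y)),
        mul_nonneg (sub_nonneg.2 hu) (mul_nonneg (mul_nonneg ha hb) (sq_nonneg (x - y)))]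
    · intro t ht
      obtain ⟨ht0, ht1⟩ := ht
      rw [hval]
      refine ⟨max_le ?_ ?_, ?_⟩
      · nlinarith [sq_nonneg (1 - t), mul_nonneg (mul_nonneg (sub_nonneg.2 ht1) ht0) (by linarith : (0:ℝ) ≤ 2 * c₁ - 1)]
      · nlinarith [sq_nonneg t, mul_nonneg (mul_nonneg (sub_nonneg.2 ht1) ht0) (by linarith : (0:ℝ) ≤ 2 * c₁ - 1)]
      · nlinarith [mul_nonneg (mul_nonneg (sub_nonneg.2 ht1) ht0) (by linarith : (0:ℝ) ≤ 1 - c₁)]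
end

section
/- A polynomial A of degree at most 3, written in the Bernstein basis as A(t) = Σ_{k=0}^3 c_k b_{k,3}(t), is a Pickands dependence function if and only if c_0 = c_3 = 1, min(c_1, c_2) ≥ 2/3, and max(2c_1 - c_2, 2c_2 - c_1) ≤ 1. -/
private lemma nonneg_at_zero' (f : ℝ → ℝ) (hf : Continuous f) (c : ℝ) (hc : 0 < c)
    (h : ∀ t, 0 < t → t ≤ c → 0 ≤ f t) : 0 ≤ f 0 := by
  have hx : Filter.Tendsto (fun n : ℕ => c / (n + 1)) Filter.atTop (nhds 0) := by
    have this := (tendsto_const_div_atTop_nhds_zero_nat c).comp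
      (Filter.tendsto_add_atTop_nat 1)
    apply this.congr; intro n; simp [Function.comp, div_eq_mul_inv, add_comm]
  have hfx : Filter.Tendsto (fun n : ℕ => f (c / (n + 1))) Filter.atTop (nhds (f 0)) :=
    (hf.tendsto 0).comp hx
  refine ge_of_tendsto' hfx fun n => ?_
  refine h _ (by positivity) ?_
  rw [div_le_iff₀ (by positivity)]
  nlinarith [Nat.cast_nonneg (α := ℝ) n]

theorem pickands_degree_three (c : ℕ → ℝ) (A : ℝ → ℝ)
    (hA : ∀ t, A t = ∑ k ∈ Finset.range 4, c k * bern 3 k t) :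
    IsPickands A ↔
      (c 0 = 1 ∧ c 3 = 1 ∧ 2 / 3 ≤ min (c 1) (c 2) ∧
        max (2 * c 1 - c 2) (2 * c 2 - c 1) ≤ 1) := by
  have hA' : ∀ t : ℝ, A t = c 0 + (3*c 1 - 3*c 0)*t + (3*c 0 - 6*c 1 + 3*c 2)*t^2
      + (c 3 - c 0 + 3*c 1 - 3*c 2)*t^3 := by
    intro t
    rw [hA]
    norm_num [bern, Finset.sum_range_succ]
    ring
  constructor
  · rintro ⟨hconv, hbd⟩
    have h0 := hbd 0 (by norm_num)
    have h1 := hbd 1 (by norm_num)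
    have hA0 : A 0 = c 0 := by rw [hA' 0]; ring
    have hA1 : A 1 = c 3 := by rw [hA' 1]; ring
    rw [hA0] at h0; rw [hA1] at h1
    norm_num at h0 h1
    have hc0 : c 0 = 1 := le_antisymm h0.2 h0.1
    have hc3 : c 3 = 1 := le_antisymm h1.2 h1.1
    have hA'' : ∀ t : ℝ, A t = 1 + (3*c 1 - 3)*t + (3 - 6*c 1 + 3*c 2)*t^2
        + (3*c 1 - 3*c 2)*t^3 := by
      intro t; rw [hA' t, hc0, hc3]; ring
    -- c 1 ≥ 2/3
    have hc1 : 2/3 ≤ c 1 := by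
      have hq := nonneg_at_zero'
        (fun t => (3*c 1 - 2) + (3 - 6*c 1 + 3*c 2)*t + (3*c 1 - 3*c 2)*t^2)
        (by fun_prop) 1 one_pos ?_
      · simp at hq; linarith
      · intro t ht ht1
        have hb := (hbd t ⟨le_of_lt ht, ht1⟩).1
        have hb' : 1 - t ≤ A t := le_trans (le_max_right _ _) hb
        have hid : A t - (1 - t)
            = t * ((3*c 1 - 2) + (3 - 6*c 1 + 3*c 2)*t + (3*c 1 - 3*c 2)*t^2) := by
          rw [hA'' t]; ring
        by_contra hneg
        push_neg at hneg
        nlinarith [mul_neg_of_pos_of_neg ht hneg]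
    -- c 2 ≥ 2/3
    have hc2 : 2/3 ≤ c 2 := by
      have hq := nonneg_at_zero'
        (fun h => 1 + (3*c 1 - 3)*(1-h) + (3*c 2 - 3*c 1)*(1-h)^2)
        (by fun_prop) 1 one_pos ?_
      · simp at hq; linarith
      · intro h ht ht1
        have hb := (hbd (1-h) ⟨by linarith, by linarith⟩).1
        have hb' : 1 - h ≤ A (1-h) := le_trans (le_max_left _ _) hb
        have hid : A (1-h) - (1-h)
            = h * (1 + (3*c 1 - 3)*(1-h) + (3*c 2 - 3*c 1)*(1-h)^2) := by
          rw [hA'' (1-h)]; ring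
        by_contra hneg
        push_neg at hneg
        nlinarith [mul_neg_of_pos_of_neg ht hneg]
    -- 2c1 - c2 ≤ 1
    have hm1 : 2 * c 1 - c 2 ≤ 1 := by
      have hq := nonneg_at_zero'
        (fun h => 2*(3 - 6*c 1 + 3*c 2) + 6*(3*c 1 - 3*c 2)*h)
        (by fun_prop) (1/2) (by norm_num) ?_
      · simp at hq; linarith
      · intro h ht ht1
        have hmid := hconv.2 (x := 0) (y := 2*h) (by norm_num)
          ⟨by linarith, by linarith⟩ (by norm_num : (0:ℝ) ≤ 1/2) (by norm_num)
          (by norm_num : (1:ℝ)/2 + 1/2 = 1)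
        simp only [smul_eq_mul] at hmid
        have heq : (1/2 : ℝ) * 0 + (1/2) * (2*h) = h := by ring
        rw [heq] at hmid
        have hid : A 0 - 2 * A h + A (2*h)
            = h^2 * (2*(3 - 6*c 1 + 3*c 2) + 6*(3*c 1 - 3*c 2)*h) := by
          rw [hA'' 0, hA'' h, hA'' (2*h)]; ring
        by_contra hneg
        push_neg at hneg
        nlinarith [mul_pos ht ht, mul_neg_of_pos_of_neg (mul_pos ht ht) hneg]
    -- 2c2 - c1 ≤ 1
    have hm2 : 2 * c 2 - c 1 ≤ 1 := by
      have hq := nonneg_at_zero'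
        (fun h => 2*(3 - 6*c 1 + 3*c 2) + 6*(3*c 1 - 3*c 2) - 6*(3*c 1 - 3*c 2)*h)
        (by fun_prop) (1/2) (by norm_num) ?_
      · simp at hq; linarith
      · intro h ht ht1
        have hmid := hconv.2 (x := (1:ℝ)) (y := 1 - 2*h) (by norm_num)
          ⟨by linarith, by linarith⟩ (by norm_num : (0:ℝ) ≤ 1/2) (by norm_num)
          (by norm_num : (1:ℝ)/2 + 1/2 = 1)
        simp only [smul_eq_mul] at hmid
        have heq : (1/2 : ℝ) * 1 + (1/2) * (1 - 2*h) = 1 - h := by ring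
        rw [heq] at hmid
        have hid : A 1 - 2 * A (1-h) + A (1-2*h)
            = h^2 * (2*(3 - 6*c 1 + 3*c 2) + 6*(3*c 1 - 3*c 2) - 6*(3*c 1 - 3*c 2)*h) := by
          rw [hA'' 1, hA'' (1-h), hA'' (1-2*h)]; ring
        by_contra hneg
        push_neg at hneg
        nlinarith [mul_pos ht ht, mul_neg_of_pos_of_neg (mul_pos ht ht) hneg]
    exact ⟨hc0, hc3, le_min hc1 hc2, max_le hm1 hm2⟩
  · rintro ⟨hc0, hc3, hmin, hmax⟩
    have h1 : 2/3 ≤ c 1 := le_trans hmin (min_le_left _ _)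
    have h2 : 2/3 ≤ c 2 := le_trans hmin (min_le_right _ _)
    have h3 : 2 * c 1 - c 2 ≤ 1 := le_trans (le_max_left _ _) hmax
    have h4 : 2 * c 2 - c 1 ≤ 1 := le_trans (le_max_right _ _) hmax
    have hA'' : ∀ t : ℝ, A t = 1 + (3*c 1 - 3)*t + (3 - 6*c 1 + 3*c 2)*t^2
        + (3*c 1 - 3*c 2)*t^3 := by
      intro t; rw [hA' t, hc0, hc3]; ring
    constructor
    · refine ⟨convex_Icc _ _, ?_⟩
      intro x hx y hy a b ha hb hab
      obtain ⟨hx0, hx1⟩ := hx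
      obtain ⟨hy0, hy1⟩ := hy
      simp only [smul_eq_mul]
      rw [hA'' x, hA'' y, hA'' (a*x + b*y)]
      have hb1 : b = 1 - a := by linarith
      subst hb1
      have ha1 : a ≤ 1 := by linarith
      have hs0 : 0 ≤ (1+a)*x + (2-a)*y := by
        nlinarith [mul_nonneg (by linarith : (0:ℝ) ≤ 1+a) hx0,
          mul_nonneg (by linarith : (0:ℝ) ≤ 2-a) hy0]
      have hs3 : (1+a)*x + (2-a)*y ≤ 3 := by
        nlinarith [mul_le_mul_of_nonneg_left hx1 (by linarith : (0:ℝ) ≤ 1+a),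
          mul_le_mul_of_nonneg_left hy1 (by linarith : (0:ℝ) ≤ 2-a)]
      have hinner : 0 ≤ (3 - 6*c 1 + 3*c 2) + (3*c 1 - 3*c 2)*((1+a)*x + (2-a)*y) := by
        nlinarith [mul_nonneg (by linarith : (0:ℝ) ≤ 3 - 6*c 1 + 3*c 2) (by linarith : (0:ℝ) ≤ 3 - ((1+a)*x + (2-a)*y)),
          mul_nonneg (by linarith : (0:ℝ) ≤ 3 + 3*c 1 - 6*c 2) hs0]
      have hid : a * (1 + (3*c 1 - 3)*x + (3 - 6*c 1 + 3*c 2)*x^2 + (3*c 1 - 3*c 2)*x^3)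
          + (1-a) * (1 + (3*c 1 - 3)*y + (3 - 6*c 1 + 3*c 2)*y^2 + (3*c 1 - 3*c 2)*y^3)
          - (1 + (3*c 1 - 3)*(a*x + (1-a)*y) + (3 - 6*c 1 + 3*c 2)*(a*x + (1-a)*y)^2
              + (3*c 1 - 3*c 2)*(a*x + (1-a)*y)^3)
          = a*(1-a)*(x-y)^2 * ((3 - 6*c 1 + 3*c 2) + (3*c 1 - 3*c 2)*((1+a)*x + (2-a)*y)) := by
        ring
      have hprod : 0 ≤ a*(1-a)*(x-y)^2 * ((3 - 6*c 1 + 3*c 2) + (3*c 1 - 3*c 2)*((1+a)*x + (2-a)*y)) :=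
        mul_nonneg (mul_nonneg (mul_nonneg ha (by linarith)) (sq_nonneg (x-y))) hinner
      linarith
    · intro t ht
      obtain ⟨ht0, ht1⟩ := ht
      have hu0 : (0:ℝ) ≤ 1 - t := by linarith
      refine ⟨max_le ?_ ?_, ?_⟩
      · -- t ≤ A t
        rw [hA'' t]
        have hid : (1 + (3*c 1 - 3)*t + (3 - 6*c 1 + 3*c 2)*t^2 + (3*c 1 - 3*c 2)*t^3) - t
            = (1-t)*t*(3*c 2 - 2) + 3*((1-t)^2*t*(1/6 - (c 2 - c 1)))
              + (1/2)*(1-t)^2 + (1/2)*((1-t)*(1-t)^2) := by ring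
        have p1 : 0 ≤ (1-t)*t*(3*c 2 - 2) :=
          mul_nonneg (mul_nonneg hu0 ht0) (by linarith)
        have p2 : 0 ≤ (1-t)^2*t*(1/6 - (c 2 - c 1)) :=
          mul_nonneg (mul_nonneg (sq_nonneg _) ht0) (by linarith)
        have p3 : 0 ≤ (1-t)^2 := sq_nonneg _
        have p4 : 0 ≤ (1-t)*(1-t)^2 := mul_nonneg hu0 (sq_nonneg _)
        linarith
      · -- 1 - t ≤ A t
        rw [hA'' t]
        have hid : (1 + (3*c 1 - 3)*t + (3 - 6*c 1 + 3*c 2)*t^2 + (3*c 1 - 3*c 2)*t^3) - (1-t)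
            = t*(1-t)*(3*c 1 - 2) + 3*(t^2*(1-t)*(1/6 - (c 1 - c 2)))
              + (1/2)*t^2 + (1/2)*(t*t^2) := by ring
        have p1 : 0 ≤ t*(1-t)*(3*c 1 - 2) :=
          mul_nonneg (mul_nonneg ht0 hu0) (by linarith)
        have p2 : 0 ≤ t^2*(1-t)*(1/6 - (c 1 - c 2)) :=
          mul_nonneg (mul_nonneg (sq_nonneg _) hu0) (by linarith)
        have p3 : 0 ≤ t^2 := sq_nonneg _
        have p4 : 0 ≤ t*t^2 := mul_nonneg ht0 (sq_nonneg _)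
        linarith
      · -- A t ≤ 1
        rw [hA'' t]
        have hid : 1 - (1 + (3*c 1 - 3)*t + (3 - 6*c 1 + 3*c 2)*t^2 + (3*c 1 - 3*c 2)*t^3)
            = 3*(t*(1-t)^2*(1 - c 1)) + 3*(t^2*(1-t)*(1 - c 2)) := by ring
        have p1 : 0 ≤ t*(1-t)^2*(1 - c 1) :=
          mul_nonneg (mul_nonneg ht0 (sq_nonneg _)) (by linarith)
        have p2 : 0 ≤ t^2*(1-t)*(1 - c 2) :=
          mul_nonneg (mul_nonneg (sq_nonneg _) hu0) (by linarith)
        linarith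
end

section
/- A polynomial h of degree at most 2, written in the Bernstein basis as h(t) = c_0 b_{0,2}(t) + c_1 b_{1,2}(t) + c_2 b_{2,2}(t), is nonnegative on [0,1] if and only if c_0 ≥ 0, c_2 ≥ 0, and c_1 ≥ -sqrt(c_0 c_2). -/
theorem quadratic_nonneg_characterization (c₀ c₁ c₂ : ℝ) (h : ℝ → ℝ)
    (hh : ∀ t, h t = c₀ * (1 - t) ^ 2 + c₁ * (2 * t * (1 - t)) + c₂ * t ^ 2) :
    (∀ t ∈ Set.Icc (0:ℝ) 1, 0 ≤ h t) ↔
      (0 ≤ c₀ ∧ 0 ≤ c₂ ∧ -Real.sqrt (c₀ * c₂) ≤ c₁) := by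
  constructor
  · intro H
    have h0 : 0 ≤ c₀ := by
      have := H 0 (by constructor <;> norm_num)
      rw [hh] at this; linarith [this]
    have h1 : 0 ≤ c₂ := by
      have := H 1 (by constructor <;> norm_num)
      rw [hh] at this; linarith [this]
    refine ⟨h0, h1, ?_⟩
    rcases le_or_gt 0 c₁ with hc | hc
    · have := Real.sqrt_nonneg (c₀ * c₂); linarith
    · -- c₁ < 0; show c₁^2 ≤ c₀ * c₂
      rcases eq_or_lt_of_le h1 with h2 | h2
      · -- c₂ = 0 : contradiction
        exfalso
        set t : ℝ := (c₀ - c₁) / (c₀ - 2 * c₁) with ht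
        have hd : 0 < c₀ - 2 * c₁ := by linarith
        have ht0 : 0 ≤ t := div_nonneg (by linarith) hd.le
        have ht1 : t ≤ 1 := by
          rw [div_le_one hd]; linarith
        have := H t ⟨ht0, ht1⟩
        rw [hh] at this
        have h1t : 1 - t = -c₁ / (c₀ - 2 * c₁) := by
          rw [ht, one_sub_div hd.ne']; congr 1; ring
        rw [h1t, ← h2] at this
        have : 0 ≤ (-c₁ / (c₀ - 2 * c₁)) * ((c₀ * (-c₁) + c₁ * (2 * (c₀ - c₁))) / (c₀ - 2 * c₁)) := by
          have e : c₀ * (-c₁ / (c₀ - 2 * c₁)) ^ 2 + c₁ * (2 * t * (-c₁ / (c₀ - 2 * c₁))) + 0 * t ^ 2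
              = (-c₁ / (c₀ - 2 * c₁)) * ((c₀ * (-c₁) + c₁ * (2 * (c₀ - c₁))) / (c₀ - 2 * c₁)) := by
            rw [ht]; field_simp; ring
          linarith [e ▸ this]
        have hu : 0 < -c₁ / (c₀ - 2 * c₁) := div_pos (by linarith) hd
        have hneg : (c₀ * (-c₁) + c₁ * (2 * (c₀ - c₁))) / (c₀ - 2 * c₁) < 0 := by
          apply div_neg_of_neg_of_pos _ hd
          nlinarith
        nlinarith
      · -- c₂ > 0
        have key : c₁ ^ 2 ≤ c₀ * c₂ := by
          set t : ℝ := -c₁ / (c₂ - c₁) with ht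
          have hd : 0 < c₂ - c₁ := by linarith
          have ht0 : 0 ≤ t := div_nonneg (by linarith) hd.le
          have ht1 : t ≤ 1 := by rw [div_le_one hd]; linarith
          have hH := H t ⟨ht0, ht1⟩
          rw [hh] at hH
          have e : c₀ * (1 - t) ^ 2 + c₁ * (2 * t * (1 - t)) + c₂ * t ^ 2
              = c₂ * (c₀ * c₂ - c₁ ^ 2) / (c₂ - c₁) ^ 2 := by
            rw [ht]; field_simp; ring
          rw [e] at hH
          have := (div_nonneg_iff.mp hH)
          rcases this with ⟨a, _⟩ | ⟨a, b⟩
          · nlinarith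
          · nlinarith [pow_pos hd 2]
        have : -c₁ ≤ Real.sqrt (c₀ * c₂) := by
          rw [show -c₁ = Real.sqrt ((-c₁)^2) from (Real.sqrt_sq (by linarith)).symm]
          apply Real.sqrt_le_sqrt; nlinarith
        linarith
  · rintro ⟨h0, h1, hc⟩ t ⟨ht0, ht1⟩
    rw [hh]
    set a := Real.sqrt c₀ with ha
    set b := Real.sqrt c₂ with hb
    have ha2 : a ^ 2 = c₀ := Real.sq_sqrt h0
    have hb2 : b ^ 2 = c₂ := Real.sq_sqrt h1
    have hab : a * b = Real.sqrt (c₀ * c₂) := (Real.sqrt_mul h0 c₂).symm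
    have hc' : -(a * b) ≤ c₁ := by rw [hab]; exact hc
    have htt : 0 ≤ t * (1 - t) := mul_nonneg ht0 (by linarith)
    nlinarith [sq_nonneg (a * (1 - t) - b * t), mul_nonneg (show (0:ℝ) ≤ c₁ + a * b by linarith) htt]
end

section
/- If A is a Pickands dependence function, then for every m ≥ 1 the Bernstein approximation B_m(A, ·) is also a Pickands dependence function, and moreover A(t) ≤ B_m(A, t) for all t ∈ [0,1]. -/
lemma bern_nonneg (m k : ℕ) {x : ℝ} (hx : x ∈ Set.Icc (0:ℝ) 1) : 0 ≤ bern m k x := by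
  obtain ⟨h0, h1⟩ := hx
  have : 0 ≤ 1 - x := by linarith
  unfold bern
  positivity

lemma bern_sum (m : ℕ) (x : ℝ) : ∑ k ∈ Finset.range (m+1), bern m k x = 1 := by
  have h : (∑ k ∈ Finset.range (m+1), bern m k x)
      = ∑ k ∈ Finset.range (m+1), x ^ k * (1-x) ^ (m-k) * (m.choose k : ℝ) :=
    Finset.sum_congr rfl (by intros; unfold bern; ring)
  rw [h, ← add_pow]
  simp

lemma choose_id_cast {m k : ℕ} (hk : k < m) :
    ((k:ℝ) + 1) * (m.choose (k+1) : ℝ) = (m : ℝ) * ((m-1).choose k : ℝ) := by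
  have hm1 : m - 1 + 1 = m := by omega
  have h := Nat.add_one_mul_choose_eq (m-1) k
  rw [hm1] at h
  have h2 := congrArg (Nat.cast (R := ℝ)) h
  push_cast at h2
  linarith

lemma choose_sub_cast {m k : ℕ} (hk : k < m) :
    ((m - k : ℕ) : ℝ) * (m.choose k : ℝ) = (m : ℝ) * ((m-1).choose k : ℝ) := by
  have hm1 : m - 1 + 1 = m := by omega
  have h := Nat.choose_mul_succ_eq (m-1) k
  rw [hm1] at h
  have h2 := congrArg (Nat.cast (R := ℝ)) h
  push_cast [Nat.cast_sub hk.le] at h2 ⊢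
  linarith

lemma hasDerivAt_sum_bern (c : ℕ → ℝ) (m : ℕ) (x : ℝ) :
    HasDerivAt (fun y => ∑ k ∈ Finset.range (m+1), c k * bern m k y)
      ((m : ℝ) * ∑ k ∈ Finset.range m, (c (k+1) - c k) * bern (m-1) k x) x := by
  have key : (fun y => ∑ k ∈ Finset.range (m+1), c k * bern m k y)
      = fun y => ∑ k ∈ Finset.range (m+1),
        (c k * (m.choose k : ℝ)) * (y ^ k * (1-y) ^ (m-k)) := by
    funext y
    refine Finset.sum_congr rfl fun k _ => ?_
    unfold bern; ring
  rw [key]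
  have hder : ∀ k ∈ Finset.range (m+1),
      HasDerivAt (fun y : ℝ => (c k * (m.choose k : ℝ)) * (y ^ k * (1-y) ^ (m-k)))
        ((c k * (m.choose k : ℝ)) *
          ((k : ℝ) * x ^ (k-1) * (1-x) ^ (m-k)
            + x ^ k * (((m-k : ℕ) : ℝ) * (1-x) ^ (m-k-1) * (-1)))) x := by
    intro k _
    have h1 : HasDerivAt (fun y : ℝ => y ^ k) ((k:ℝ) * x ^ (k-1)) x := hasDerivAt_pow k x
    have h0 : HasDerivAt (fun y : ℝ => 1 - y) (-1 : ℝ) x := by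
      simpa using (hasDerivAt_id x).const_sub (1:ℝ)
    have h2 := h0.pow (m-k)
    exact (h1.mul h2).const_mul _
  have := HasDerivAt.fun_sum hder
  convert this using 1
  · rfl
  · rfl
  have split : ∀ k, (c k * (m.choose k : ℝ)) *
      ((k : ℝ) * x ^ (k-1) * (1-x) ^ (m-k)
        + x ^ k * (((m-k : ℕ) : ℝ) * (1-x) ^ (m-k-1) * (-1)))
      = (c k * (m.choose k : ℝ)) * ((k : ℝ) * x ^ (k-1) * (1-x) ^ (m-k))
        - (c k * (m.choose k : ℝ)) * (x ^ k * (((m-k : ℕ) : ℝ) * (1-x) ^ (m-k-1))) := by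
    intro k; ring
  rw [Finset.sum_congr rfl (fun k _ => split k), Finset.sum_sub_distrib,
    Finset.sum_range_succ', Finset.sum_range_succ]
  simp only [Nat.cast_zero, Nat.sub_self, zero_mul, mul_zero, add_zero, sub_zero]
  rw [← Finset.sum_sub_distrib, Finset.mul_sum]
  refine Finset.sum_congr rfl fun k hk => ?_
  have hkm : k < m := Finset.mem_range.mp hk
  have e1 : m - (k+1) = (m-1) - k := by omega
  have e2 : m - k - 1 = (m-1) - k := by omega
  have e3 : (k+1) - 1 = k := by omega
  have r1 := choose_id_cast hkm
  have r2 := choose_sub_cast hkm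
  unfold bern
  rw [e1, e2, e3]
  push_cast
  linear_combination (c k * x ^ k * (1-x) ^ ((m-1)-k)) * r2
    - (c (k+1) * x ^ k * (1-x) ^ ((m-1)-k)) * r1

lemma bern_sum_mul {m : ℕ} (hm : 1 ≤ m) (x : ℝ) :
    ∑ k ∈ Finset.range (m+1), ((k:ℝ)/(m:ℝ)) * bern m k x = x := by
  have hmne : (m:ℝ) ≠ 0 := by positivity
  rw [Finset.sum_range_succ']
  simp only [Nat.cast_zero, zero_div, zero_mul, add_zero]
  have : ∀ k ∈ Finset.range m,
      (((k+1 : ℕ):ℝ)/(m:ℝ)) * bern m (k+1) x = x * bern (m-1) k x := by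
    intro k hk
    have hkm : k < m := Finset.mem_range.mp hk
    have r1 := choose_id_cast hkm
    have e1 : m - (k+1) = (m-1) - k := by omega
    unfold bern
    rw [e1]
    push_cast
    field_simp
    linear_combination (x ^ (k+1) * (1-x) ^ ((m-1)-k)) * r1
  rw [Finset.sum_congr rfl this, ← Finset.mul_sum]
  have := bern_sum (m-1) x
  rw [show m - 1 + 1 = m by omega] at this
  rw [this, mul_one]

theorem bernstein_approx_pickands (A : ℝ → ℝ) (hA : IsPickands A) (m : ℕ) (hm : 1 ≤ m) :
    IsPickands (bernApprox A m) ∧ ∀ t ∈ Set.Icc (0:ℝ) 1, A t ≤ bernApprox A m t := by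
  obtain ⟨hconv, hbound⟩ := hA
  have hmem : ∀ k, k ∈ Finset.range (m+1) → ((k:ℝ)/(m:ℝ)) ∈ Set.Icc (0:ℝ) 1 := by
    intro k hk
    have hk' : k ≤ m := by have := Finset.mem_range.mp hk; omega
    have hmpos : (0:ℝ) < m := by positivity
    constructor
    · positivity
    · rw [div_le_one hmpos]; exact_mod_cast hk'
  -- the coefficients
  set c : ℕ → ℝ := fun k => A ((k:ℝ)/(m:ℝ)) with hc
  -- convexity
  have hconvB : ConvexOn ℝ (Set.Icc (0:ℝ) 1) (bernApprox A m) := by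
    have hF : ∀ x : ℝ, HasDerivAt (bernApprox A m)
        ((m : ℝ) * ∑ k ∈ Finset.range m, (c (k+1) - c k) * bern (m-1) k x) x := by
      intro x
      exact hasDerivAt_sum_bern c m x
    set G : ℝ → ℝ := fun x => ∑ k ∈ Finset.range ((m-1)+1), (c (k+1) - c k) * bern (m-1) k x
      with hG
    have hrange : m - 1 + 1 = m := by omega
    have hFG : ∀ x : ℝ, HasDerivAt (bernApprox A m) ((m:ℝ) * G x) x := by
      intro x; have := hF x; rw [hG]; simpa [hrange] using this
    have hGder : ∀ x : ℝ, HasDerivAt G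
        (((m-1 : ℕ) : ℝ) * ∑ k ∈ Finset.range (m-1),
          ((c (k+2) - c (k+1)) - (c (k+1) - c k)) * bern (m-1-1) k x) x := by
      intro x
      exact hasDerivAt_sum_bern (fun k => c (k+1) - c k) (m-1) x
    refine convexOn_of_hasDerivWithinAt2_nonneg (convex_Icc 0 1)
      (f' := fun x => (m:ℝ) * G x)
      (f'' := fun x => (m:ℝ) * (((m-1 : ℕ) : ℝ) * ∑ k ∈ Finset.range (m-1),
          ((c (k+2) - c (k+1)) - (c (k+1) - c k)) * bern (m-1-1) k x))
      ?_ ?_ ?_ ?_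
    · intro x hx
      exact (hFG x).continuousAt.continuousWithinAt
    · intro x hx
      exact (hFG x).hasDerivWithinAt
    · intro x hx
      exact (((hGder x).const_mul ((m:ℝ))).hasDerivWithinAt)
    · intro x hx
      rw [interior_Icc] at hx
      have hx' : x ∈ Set.Icc (0:ℝ) 1 := ⟨hx.1.le, hx.2.le⟩
      have hterm : ∀ k ∈ Finset.range (m-1),
          0 ≤ ((c (k+2) - c (k+1)) - (c (k+1) - c k)) * bern (m-1-1) k x := by
        intro k hk
        have hkm : k < m - 1 := Finset.mem_range.mp hk
        have hk2 : k + 2 ≤ m := by omega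
        -- convexity second difference
        have ha : ((k:ℝ)/(m:ℝ)) ∈ Set.Icc (0:ℝ) 1 :=
          hmem k (Finset.mem_range.mpr (by omega))
        have hb : (((k+2:ℕ):ℝ)/(m:ℝ)) ∈ Set.Icc (0:ℝ) 1 :=
          hmem (k+2) (Finset.mem_range.mpr (by omega))
        have hmid := hconv.2 ha hb (by norm_num : (0:ℝ) ≤ 1/2) (by norm_num : (0:ℝ) ≤ 1/2)
          (by norm_num)
        have hmne : (m:ℝ) ≠ 0 := by positivity
        have heq : (1/2 : ℝ) • ((k:ℝ)/(m:ℝ)) + (1/2 : ℝ) • (((k+2:ℕ):ℝ)/(m:ℝ))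
            = ((k+1:ℕ):ℝ)/(m:ℝ) := by
          push_cast
          field_simp
          simp only [smul_eq_mul]; linear_combination ((k:ℝ)+1) * mul_inv_cancel₀ hmne
        rw [heq] at hmid
        have hsd : 0 ≤ (c (k+2) - c (k+1)) - (c (k+1) - c k) := by
          simp only [hc]
          rw [smul_eq_mul, smul_eq_mul] at hmid
          push_cast at hmid ⊢
          linarith
        exact mul_nonneg hsd (bern_nonneg _ _ hx')
      have := Finset.sum_nonneg hterm
      positivity
  -- sum of weights is one etc.
  have hwsum : ∀ t : ℝ, ∑ k ∈ Finset.range (m+1), bern m k t = 1 := fun t => bern_sum m t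
  constructor
  · refine ⟨hconvB, ?_⟩
    intro t ht
    have hw : ∀ k ∈ Finset.range (m+1), 0 ≤ bern m k t := fun k _ => bern_nonneg m k ht
    constructor
    · -- max t (1-t) ≤ B t
      have hlow : ∀ k ∈ Finset.range (m+1),
          ((k:ℝ)/(m:ℝ)) * bern m k t ≤ A ((k:ℝ)/(m:ℝ)) * bern m k t := by
        intro k hk
        have h := (hbound _ (hmem k hk)).1
        have h1 : ((k:ℝ)/(m:ℝ)) ≤ A ((k:ℝ)/(m:ℝ)) := le_trans (le_max_left _ _) h
        exact mul_le_mul_of_nonneg_right h1 (hw k hk)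
      have hlow2 : ∀ k ∈ Finset.range (m+1),
          (1 - (k:ℝ)/(m:ℝ)) * bern m k t ≤ A ((k:ℝ)/(m:ℝ)) * bern m k t := by
        intro k hk
        have h := (hbound _ (hmem k hk)).1
        have h1 : (1 - (k:ℝ)/(m:ℝ)) ≤ A ((k:ℝ)/(m:ℝ)) := le_trans (le_max_right _ _) h
        exact mul_le_mul_of_nonneg_right h1 (hw k hk)
      apply max_le
      · calc t = ∑ k ∈ Finset.range (m+1), ((k:ℝ)/(m:ℝ)) * bern m k t :=
            (bern_sum_mul hm t).symm
          _ ≤ ∑ k ∈ Finset.range (m+1), A ((k:ℝ)/(m:ℝ)) * bern m k t :=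
            Finset.sum_le_sum hlow
          _ = bernApprox A m t := rfl
      · have hsplit : ∀ k ∈ Finset.range (m+1), (1 - (k:ℝ)/(m:ℝ)) * bern m k t
            = bern m k t - ((k:ℝ)/(m:ℝ)) * bern m k t := by
          intro k _; ring
        calc 1 - t = ∑ k ∈ Finset.range (m+1), (1 - (k:ℝ)/(m:ℝ)) * bern m k t := by
              rw [Finset.sum_congr rfl hsplit, Finset.sum_sub_distrib, hwsum t,
                bern_sum_mul hm t]
          _ ≤ ∑ k ∈ Finset.range (m+1), A ((k:ℝ)/(m:ℝ)) * bern m k t :=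
            Finset.sum_le_sum hlow2
          _ = bernApprox A m t := rfl
    · -- B t ≤ 1
      calc bernApprox A m t ≤ ∑ k ∈ Finset.range (m+1), 1 * bern m k t := by
              refine Finset.sum_le_sum fun k hk => ?_
              exact mul_le_mul_of_nonneg_right ((hbound _ (hmem k hk)).2) (hw k hk)
        _ = 1 := by rw [Finset.sum_congr rfl fun k _ => one_mul _]; exact hwsum t
  · -- Jensen
    intro t ht
    have hw : ∀ k ∈ Finset.range (m+1), 0 ≤ bern m k t := fun k _ => bern_nonneg m k ht
    have hmemI : ∀ k ∈ Finset.range (m+1), ((k:ℝ)/(m:ℝ)) ∈ Set.Icc (0:ℝ) 1 := hmem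
    have hjensen := hconv.map_sum_le hw (hwsum t) hmemI
    have heq : (∑ k ∈ Finset.range (m+1), bern m k t • ((k:ℝ)/(m:ℝ))) = t := by
      simp only [smul_eq_mul]
      rw [Finset.sum_congr rfl fun k _ => mul_comm (bern m k t) _]
      exact bern_sum_mul hm t
    rw [heq] at hjensen
    calc A t ≤ ∑ k ∈ Finset.range (m+1), bern m k t • A ((k:ℝ)/(m:ℝ)) := hjensen
      _ = bernApprox A m t := by
        refine Finset.sum_congr rfl fun k _ => ?_
        simp only [smul_eq_mul]
        rw [mul_comm]
end
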